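/- (Uniformized KL property, without lower semicontinuity.) Let Υ ⊆ ℝ^n be a compact set and let φ: ℝ^n → (−∞,+∞] be proper and constant on Υ. (i) If φ satisfies the KL property at each point of Υ, then there exist ε > 0, δ > 0 and a continuous concave function ϕ: [0,ε) → [0,+∞) with ϕ(0) = 0, ϕ continuously differentiable on (0,ε) with ϕ′ > 0, such that ϕ′(φ(z) − φ(x))·dist(0, ∂φ(z)) ≥ 1 holds for every x ∈ Υ and every z ∈ B(x,δ) with φ(x) < φ(z) < φ(x) + ε. (ii) If φ satisfies the KL property at each point of Υ with exponent θ ∈ [0,1), then there exist ε, δ, c > 0 such that dist(0, ∂φ(z)) ≥ c·(φ(z) − φ(x))^θ holds for every x ∈ Υ and every z ∈ B(x,δ) with φ(x) < φ(z) < φ(x) + ε. -/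

import Mathlib

open Filter Topology Set
open scoped RealInnerProductSpace Pointwise NNReal

noncomputable section

namespace Paper

variable {E : Type*} [NormedAddCommGroup E] [InnerProductSpace ℝ E]

/-- The effective domain of an extended-real-valued function. -/
def edom (φ : E → EReal) : Set E := {x | φ x ≠ ⊤}

/-- A function with values in `(-∞, +∞]` is proper if it is not identically `+∞`
and never takes the value `-∞`. -/
def Proper (φ : E → EReal) : Prop := (∃ x, φ x ≠ ⊤) ∧ ∀ x, φ x ≠ ⊥

/-- The Fréchet subdifferential of `φ` at `x`. -/
def frSubdiff (φ : E → EReal) (x : E) : Set E :=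
  {y | φ x ≠ ⊤ ∧ 0 ≤ Filter.liminf
      (fun z : E => (φ z - φ x - ((⟪y, z - x⟫ : ℝ) : EReal)) * ((‖z - x‖⁻¹ : ℝ) : EReal))
      (𝓝[≠] x)}

/-- The limiting (Mordukhovich) subdifferential of `φ` at `x`. -/
def limSubdiff (φ : E → EReal) (x : E) : Set E :=
  {y | ∃ u v : ℕ → E,
      Tendsto u atTop (𝓝 x) ∧ Tendsto (fun k => φ (u k)) atTop (𝓝 (φ x)) ∧
      (∀ k, v k ∈ frSubdiff φ (u k)) ∧ Tendsto v atTop (𝓝 y)}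

/-- The convex subdifferential of a real-valued function. -/
def cvxSubdiff (g : E → ℝ) (x : E) : Set E :=
  {y | ∀ z, g x + ⟪y, z - x⟫ ≤ g z}

/-- The convex subdifferential of an extended-real-valued function. -/
def cvxSubdiffE (φ : E → EReal) (x : E) : Set E :=
  {y | ∀ z, φ x + ((⟪y, z - x⟫ : ℝ) : EReal) ≤ φ z}

/-- The Fenchel conjugate of an extended-real-valued function. -/
def fconjE (φ : E → EReal) : E → EReal :=
  fun y => ⨆ x : E, (((⟪x, y⟫ : ℝ) : EReal) - φ x)

/-- The Fenchel conjugate of a real-valued function. -/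
def fconj (g : E → ℝ) : E → EReal := fconjE (fun x => ((g x : ℝ) : EReal))

/-- `φ` satisfies the calmness condition at `x` relative to `A`. -/
def CalmAt (φ : E → EReal) (x : E) (A : Set E) : Prop :=
  ∃ κ : ℝ, 0 < κ ∧ ∃ B ∈ 𝓝 x, ∀ u ∈ B ∩ A,
    φ u ≤ φ x + ((κ * ‖u - x‖ : ℝ) : EReal) ∧ φ x ≤ φ u + ((κ * ‖u - x‖ : ℝ) : EReal)

/-- `φ` satisfies the calmness condition on `A`. -/
def CalmOn (φ : E → EReal) (A : Set E) : Prop := ∀ x ∈ A, CalmAt φ x A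

/-- The Kurdyka–Łojasiewicz property of `φ` at `x`. -/
def KLAt (φ : E → EReal) (x : E) : Prop :=
  ∃ ε > (0 : ℝ), ∃ δ > (0 : ℝ), ∃ ϕ ϕ' : ℝ → ℝ,
    ϕ 0 = 0 ∧ ContinuousOn ϕ (Set.Ico 0 ε) ∧ ConcaveOn ℝ (Set.Ico 0 ε) ϕ ∧
    (∀ s ∈ Set.Ioo (0 : ℝ) ε, HasDerivAt ϕ (ϕ' s) s) ∧
    ContinuousOn ϕ' (Set.Ioo 0 ε) ∧ (∀ s ∈ Set.Ioo (0 : ℝ) ε, 0 < ϕ' s) ∧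
    ∀ z ∈ Metric.ball x δ, φ x < φ z → φ z < φ x + (ε : EReal) →
      1 ≤ ENNReal.ofReal (ϕ' ((φ z).toReal - (φ x).toReal)) *
        EMetric.infEdist (0 : E) (limSubdiff φ z)

/-- The KL property of `φ` at `x` with exponent `θ`. -/
def KLExpAt (φ : E → EReal) (x : E) (θ : ℝ) : Prop :=
  ∃ c > (0 : ℝ), ∃ ε > (0 : ℝ), ∃ δ > (0 : ℝ),
    ∀ z ∈ Metric.ball x δ, φ x < φ z → φ z < φ x + (ε : EReal) →
      ENNReal.ofReal (c * ((φ z).toReal - (φ x).toReal) ^ θ) ≤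
        EMetric.infEdist (0 : E) (limSubdiff φ z)

/-- The (possibly multivalued) proximity operator of `φ`. -/
def proxSet (φ : E → EReal) (u : E) : Set E :=
  {z | ∀ w, φ z + ((‖z - u‖ ^ 2 / 2 : ℝ) : EReal) ≤ φ w + ((‖w - u‖ ^ 2 / 2 : ℝ) : EReal)}

/-- A positive scaling of an extended-real-valued function. -/
def scaleE (α : ℝ) (φ : E → EReal) : E → EReal := fun x => ((α : ℝ) : EReal) * φ x

/-- `h` is locally Lipschitz differentiable on `s`. -/
def LocLipGradOn [CompleteSpace E] (h : E → ℝ) (s : Set E) : Prop :=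
  (∀ x ∈ s, DifferentiableAt ℝ h x) ∧
  ∀ x ∈ s, ∃ U ∈ 𝓝 x, ∃ L : ℝ, ∀ u ∈ U ∩ s, ∀ v ∈ U ∩ s,
    ‖gradient h u - gradient h v‖ ≤ L * ‖u - v‖

/-- The numerator `ζ = f + h`. -/
def zeta (f : E → EReal) (h : E → ℝ) (x : E) : EReal := f x + ((h x : ℝ) : EReal)

/-- `η(x,y) = ⟨x,y⟩ − g^*(y)`. -/
def eta (g : E → ℝ) (x y : E) : EReal := ((⟪x, y⟫ : ℝ) : EReal) - fconj g y

/-- The extended objective of the fractional problem. -/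
def Ffun (f : E → EReal) (g h : E → ℝ) (x : E) : EReal :=
  if g x ≠ 0 ∧ f x ≠ ⊤ then ((((f x).toReal + h x) / g x : ℝ) : EReal) else ⊤

/-- The extended objective of the reformulated problem. -/
def Qfun (f : E → EReal) (g h : E → ℝ) (x y : E) : EReal :=
  if f x ≠ ⊤ ∧ 0 < eta g x y then
    ((((f x).toReal + h x) / (eta g x y).toReal : ℝ) : EReal) else ⊤

/-- Pack a pair into the `ℓ²` product space. -/
def mk2 (x y : E) : WithLp 2 (E × E) := (WithLp.equiv 2 (E × E)).symm (x, y)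

def pr1 (p : WithLp 2 (E × E)) : E := (WithLp.equiv 2 (E × E) p).1

def pr2 (p : WithLp 2 (E × E)) : E := (WithLp.equiv 2 (E × E) p).2

/-- `Q` as a function on the `ℓ²` product space. -/
def Qpair (f : E → EReal) (g h : E → ℝ) (p : WithLp 2 (E × E)) : EReal :=
  Qfun f g h (pr1 p) (pr2 p)

/-- The blanket assumptions of the paper. -/
structure Blanket [CompleteSpace E] (f : E → EReal) (g h : E → ℝ) : Prop where
  f_proper : Proper f
  f_lsc : LowerSemicontinuous f
  f_cont : ContinuousOn f (edom f)
  f_bddBelow : ∃ m : ℝ, ∀ x, (m : EReal) ≤ f x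
  h_lsc : LowerSemicontinuous h
  h_diff : LocLipGradOn h {x | g x ≠ 0}
  g_convex : ConvexOn ℝ Set.univ g
  g_nonneg : ∀ x, 0 ≤ g x
  omega_nonempty : ∃ x, g x ≠ 0
  zeta_nonneg : ∀ x, f x ≠ ⊤ → 0 ≤ zeta f h x

/-- `x` is a critical point of `F`: `0 ∈ ∂̂f(x) + ∇h(x) − F(x)·∂g(x)`. -/
def IsCritF [CompleteSpace E] (f : E → EReal) (g h : E → ℝ) (x : E) : Prop :=
  g x ≠ 0 ∧ f x ≠ ⊤ ∧
  ∃ u ∈ frSubdiff f x, ∃ v ∈ cvxSubdiff g x,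
    u + gradient h x - (Ffun f g h x).toReal • v = 0

/-- The level set `X = {x : F(x) ≤ F(x⁰)}`. -/
def lvlSet (f : E → EReal) (g h : E → ℝ) (x0 : E) : Set E :=
  {x | Ffun f g h x ≤ Ffun f g h x0}

/-- The enlargement `X_{α̲}` of the level set. -/
def Xal (f : E → EReal) (g h : E → ℝ) (x0 : E) (αl : ℝ) : Set E :=
  {z | (Metric.infDist z (lvlSet f g h x0)) ^ 2 ≤ sSup (g '' lvlSet f g h x0) / αl}

/-- The compact set `𝒴 = ∪_{z ∈ X_{α̲}} ∂g(z)`. -/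
def Yset (f : E → EReal) (g h : E → ℝ) (x0 : E) (αl : ℝ) : Set E :=
  ⋃ z ∈ Xal f g h x0 αl, cvxSubdiff g z

/-- The set `S = {(x,y) ∈ X × 𝒴 : η(x,y) > 0}`. -/
def Sset (f : E → EReal) (g h : E → ℝ) (x0 : E) (αl : ℝ) : Set (E × E) :=
  {p | p.1 ∈ lvlSet f g h x0 ∧ p.2 ∈ Yset f g h x0 αl ∧ 0 < eta g p.1 p.2}

/-- The set of accumulation points of a sequence. -/
def accSet {X : Type*} [TopologicalSpace X] (pt : ℕ → X) : Set X :=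
  {p | ∃ σ : ℕ → ℕ, StrictMono σ ∧ Tendsto (pt ∘ σ) atTop (𝓝 p)}

/-- A polyhedral function: its epigraph is a finite intersection of closed half-spaces. -/
def IsPolyhedralFn (φ : E → EReal) : Prop :=
  ∃ (m : ℕ) (w : Fin m → E) (c b : Fin m → ℝ),
    ∀ (x : E) (a : ℝ), (φ x ≤ (a : EReal) ↔ ∀ i, ⟪w i, x⟫ + c i * a ≤ b i)



lemma concaveOn_finset_sum {ι : Type*} (t : Finset ι) {s : Set ℝ} (hs : Convex ℝ s)
    (f : ι → ℝ → ℝ) (hf : ∀ i ∈ t, ConcaveOn ℝ s (f i)) :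
    ConcaveOn ℝ s (fun x => ∑ i ∈ t, f i x) := by
  classical
  induction t using Finset.induction with
  | empty => simpa using concaveOn_const (0 : ℝ) hs
  | @insert a u hnotmem ih =>
    simp only [Finset.sum_insert hnotmem]
    exact (hf a (Finset.mem_insert_self a u)).add
      (ih fun i hi => hf i (Finset.mem_insert_of_mem hi))

lemma ereal_extract {φ : EReal} {c : EReal} {ε : ℝ} (hbot : c ≠ ⊥)
    (h1 : c < φ) (h2 : φ < c + (ε : EReal)) :
    c.toReal < φ.toReal ∧ φ.toReal < c.toReal + ε ∧ φ ≠ ⊤ ∧ φ ≠ ⊥ ∧ c ≠ ⊤ := by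
  have hcnetop : c ≠ ⊤ := by
    intro h; rw [h] at h1; exact (not_top_lt h1)
  lift c to ℝ using ⟨hcnetop, hbot⟩
  have hφtop : φ ≠ ⊤ := by
    intro h; rw [h] at h2
    rw [← EReal.coe_add] at h2
    exact (not_top_lt h2)
  have hφbot : φ ≠ ⊥ := ne_bot_of_gt h1
  lift φ to ℝ using ⟨hφtop, hφbot⟩
  rw [← EReal.coe_add, EReal.coe_lt_coe_iff] at h2
  rw [EReal.coe_lt_coe_iff] at h1
  simp only [EReal.toReal_coe]
  exact ⟨h1, h2, by simp, by simp, by simp⟩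

/-- Uniformized KL property over a compact set, without lower semicontinuity. -/
theorem statement2 {n : ℕ} (φ : EuclideanSpace ℝ (Fin n) → EReal)
    (Υ : Set (EuclideanSpace ℝ (Fin n)))
    (hcomp : IsCompact Υ) (hproper : Proper φ)
    (hconst : ∀ x ∈ Υ, ∀ y ∈ Υ, φ x = φ y)
    (hdom : ∀ x ∈ Υ, (limSubdiff φ x).Nonempty) :
    ((∀ x ∈ Υ, KLAt φ x) →
      ∃ ε > (0 : ℝ), ∃ δ > (0 : ℝ), ∃ ϕ ϕ' : ℝ → ℝ,
        ϕ 0 = 0 ∧ ContinuousOn ϕ (Set.Ico 0 ε) ∧ ConcaveOn ℝ (Set.Ico 0 ε) ϕ ∧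
        (∀ s ∈ Set.Ioo (0 : ℝ) ε, HasDerivAt ϕ (ϕ' s) s) ∧
        ContinuousOn ϕ' (Set.Ioo 0 ε) ∧ (∀ s ∈ Set.Ioo (0 : ℝ) ε, 0 < ϕ' s) ∧
        ∀ x ∈ Υ, ∀ z ∈ Metric.ball x δ, φ x < φ z → φ z < φ x + (ε : EReal) →
          1 ≤ ENNReal.ofReal (ϕ' ((φ z).toReal - (φ x).toReal)) *
              EMetric.infEdist (0 : EuclideanSpace ℝ (Fin n)) (limSubdiff φ z)) ∧
    (∀ θ : ℝ, 0 ≤ θ → θ < 1 → (∀ x ∈ Υ, KLExpAt φ x θ) →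
      ∃ ε > (0 : ℝ), ∃ δ > (0 : ℝ), ∃ c > (0 : ℝ),
        ∀ x ∈ Υ, ∀ z ∈ Metric.ball x δ, φ x < φ z → φ z < φ x + (ε : EReal) →
          ENNReal.ofReal (c * ((φ z).toReal - (φ x).toReal) ^ θ) ≤
            EMetric.infEdist (0 : EuclideanSpace ℝ (Fin n)) (limSubdiff φ z)) := by
  constructor
  · intro hKL
    rcases Set.eq_empty_or_nonempty Υ with hΥ | ⟨x₀, hx₀⟩
    · refine ⟨1, one_pos, 1, one_pos, id, fun _ => 1, rfl, continuousOn_id,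
        concaveOn_id (convex_Ico 0 1), fun s _ => hasDerivAt_id s, continuousOn_const,
        fun s _ => one_pos, ?_⟩
      intro x hx
      rw [hΥ] at hx
      exact absurd hx (Set.notMem_empty x)
    · choose ε hε δ hδ ϕ ϕ' h0 hcont hconc hderiv hcont' hpos hineq using
        fun x : Υ => hKL x x.2
      obtain ⟨t, ht⟩ := hcomp.elim_finite_subcover
        (fun x : Υ => Metric.ball (x : EuclideanSpace ℝ (Fin n)) (δ x / 2))
        (fun x => Metric.isOpen_ball)
        (fun y hy => Set.mem_iUnion.2 ⟨⟨y, hy⟩, Metric.mem_ball_self (half_pos (hδ ⟨y, hy⟩))⟩)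
      have htne : t.Nonempty := by
        obtain ⟨i, hi, -⟩ := Set.mem_iUnion₂.1 (ht hx₀)
        exact ⟨i, hi⟩
      set ε₀ : ℝ := t.inf' htne ε with hε₀def
      set δ₀ : ℝ := t.inf' htne (fun i => δ i / 2) with hδ₀def
      have hε₀pos : 0 < ε₀ := (Finset.lt_inf'_iff _).2 fun i _ => hε i
      have hδ₀pos : 0 < δ₀ := (Finset.lt_inf'_iff _).2 fun i _ => half_pos (hδ i)
      have hsub : ∀ i ∈ t, Set.Ico (0:ℝ) ε₀ ⊆ Set.Ico 0 (ε i) := fun i hi =>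
        Set.Ico_subset_Ico le_rfl (Finset.inf'_le ε hi)
      have hsubo : ∀ i ∈ t, Set.Ioo (0:ℝ) ε₀ ⊆ Set.Ioo 0 (ε i) := fun i hi =>
        Set.Ioo_subset_Ioo le_rfl (Finset.inf'_le ε hi)
      refine ⟨ε₀, hε₀pos, δ₀, hδ₀pos, fun s => ∑ i ∈ t, ϕ i s, fun s => ∑ i ∈ t, ϕ' i s,
        ?_, ?_, ?_, ?_, ?_, ?_, ?_⟩
      · simp [h0]
      · exact continuousOn_finset_sum t fun i hi => (hcont i).mono (hsub i hi)
      · exact concaveOn_finset_sum t (convex_Ico 0 ε₀) _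
          fun i hi => (hconc i).subset (hsub i hi) (convex_Ico 0 ε₀)
      · intro s hs
        exact HasDerivAt.fun_sum fun i hi => hderiv i s (hsubo i hi hs)
      · exact continuousOn_finset_sum t fun i hi => (hcont' i).mono (hsubo i hi)
      · intro s hs
        exact Finset.sum_pos (fun i hi => hpos i s (hsubo i hi hs)) htne
      · intro x hx z hz hlt1 hlt2
        obtain ⟨i, hi, hxi⟩ := Set.mem_iUnion₂.1 (ht hx)
        have hconst' : φ x = φ (i : EuclideanSpace ℝ (Fin n)) := hconst x hx i i.2
        have hzball : z ∈ Metric.ball (i : EuclideanSpace ℝ (Fin n)) (δ i) := by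
          rw [Metric.mem_ball] at hz hxi ⊢
          have hd := Finset.inf'_le (fun j => δ j / 2) hi
          calc dist z i ≤ dist z x + dist x i := dist_triangle z x i
            _ < δ₀ + δ i / 2 := add_lt_add_of_lt_of_le hz hxi.le
            _ ≤ δ i / 2 + δ i / 2 := by linarith [hd]
            _ = δ i := by ring
        have hbot : φ x ≠ ⊥ := hproper.2 x
        obtain ⟨hs1, hs2, hztop, hzbot, hxtop⟩ := ereal_extract hbot hlt1 hlt2
        set s : ℝ := (φ z).toReal - (φ x).toReal with hsdef
        have hsIoo : s ∈ Set.Ioo (0:ℝ) ε₀ := ⟨by simp only [hsdef]; linarith,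
          by simp only [hsdef]; linarith⟩
        have hlt2' : φ z < φ (i : EuclideanSpace ℝ (Fin n)) + ((ε i : ℝ) : EReal) := by
          rw [← hconst']
          refine lt_of_lt_of_le hlt2 ?_
          have hle : (ε₀ : EReal) ≤ ((ε i : ℝ) : EReal) :=
            EReal.coe_le_coe_iff.2 (Finset.inf'_le ε hi)
          exact add_le_add_right hle _
        have hkey := hineq i z hzball (hconst' ▸ hlt1) hlt2'
        have hseq : (φ z).toReal - (φ (i : EuclideanSpace ℝ (Fin n))).toReal = s := by
          rw [← hconst']
        rw [hseq] at hkey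
        refine le_trans hkey ?_
        refine mul_le_mul_left (ENNReal.ofReal_le_ofReal ?_) _
        refine Finset.single_le_sum (f := fun j => ϕ' j s) ?_ hi
        intro j hj
        exact (hpos j s (hsubo j hj hsIoo)).le
  · intro θ hθ0 hθ1 hKL
    rcases Set.eq_empty_or_nonempty Υ with hΥ | ⟨x₀, hx₀⟩
    · refine ⟨1, one_pos, 1, one_pos, 1, one_pos, ?_⟩
      intro x hx
      rw [hΥ] at hx
      exact absurd hx (Set.notMem_empty x)
    · choose c hc ε hε δ hδ hineq using fun x : Υ => hKL x x.2
      obtain ⟨t, ht⟩ := hcomp.elim_finite_subcover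
        (fun x : Υ => Metric.ball (x : EuclideanSpace ℝ (Fin n)) (δ x / 2))
        (fun x => Metric.isOpen_ball)
        (fun y hy => Set.mem_iUnion.2 ⟨⟨y, hy⟩, Metric.mem_ball_self (half_pos (hδ ⟨y, hy⟩))⟩)
      have htne : t.Nonempty := by
        obtain ⟨i, hi, -⟩ := Set.mem_iUnion₂.1 (ht hx₀)
        exact ⟨i, hi⟩
      set ε₀ : ℝ := t.inf' htne ε with hε₀def
      set δ₀ : ℝ := t.inf' htne (fun i => δ i / 2) with hδ₀def
      set c₀ : ℝ := t.inf' htne c with hc₀def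
      have hε₀pos : 0 < ε₀ := (Finset.lt_inf'_iff _).2 fun i _ => hε i
      have hδ₀pos : 0 < δ₀ := (Finset.lt_inf'_iff _).2 fun i _ => half_pos (hδ i)
      have hc₀pos : 0 < c₀ := (Finset.lt_inf'_iff _).2 fun i _ => hc i
      refine ⟨ε₀, hε₀pos, δ₀, hδ₀pos, c₀, hc₀pos, ?_⟩
      intro x hx z hz hlt1 hlt2
      obtain ⟨i, hi, hxi⟩ := Set.mem_iUnion₂.1 (ht hx)
      have hconst' : φ x = φ (i : EuclideanSpace ℝ (Fin n)) := hconst x hx i i.2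
      have hzball : z ∈ Metric.ball (i : EuclideanSpace ℝ (Fin n)) (δ i) := by
        rw [Metric.mem_ball] at hz hxi ⊢
        have hd := Finset.inf'_le (fun j => δ j / 2) hi
        calc dist z i ≤ dist z x + dist x i := dist_triangle z x i
          _ < δ₀ + δ i / 2 := add_lt_add_of_lt_of_le hz hxi.le
          _ ≤ δ i / 2 + δ i / 2 := by linarith [hd]
          _ = δ i := by ring
      have hlt2' : φ z < φ (i : EuclideanSpace ℝ (Fin n)) + ((ε i : ℝ) : EReal) := by
        rw [← hconst']
        refine lt_of_lt_of_le hlt2 ?_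
        have hle : (ε₀ : EReal) ≤ ((ε i : ℝ) : EReal) :=
          EReal.coe_le_coe_iff.2 (Finset.inf'_le ε hi)
        exact add_le_add_right hle _
      have hkey := hineq i z hzball (hconst' ▸ hlt1) hlt2'
      have hseq : (φ z).toReal - (φ (i : EuclideanSpace ℝ (Fin n))).toReal
          = (φ z).toReal - (φ x).toReal := by rw [← hconst']
      rw [hseq] at hkey
      refine le_trans (ENNReal.ofReal_le_ofReal ?_) hkey
      have hbot : φ x ≠ ⊥ := hproper.2 x
      obtain ⟨hs1, hs2, -, -, -⟩ := ereal_extract hbot hlt1 hlt2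
      have hpow : (0:ℝ) ≤ ((φ z).toReal - (φ x).toReal) ^ θ :=
        Real.rpow_nonneg (by linarith) θ
      exact mul_le_mul_of_nonneg_right (Finset.inf'_le c hi) hpow
end Paper
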